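/- arXiv:2305.01091 — 3 statements merged into one kernel-verified Lean document; each statement's English description precedes it below -/
import Mathlib

section
/- Let d be a rational number and a1, a2, b1, b2, c rationals with a1^2 - d*a2^2 = -1, b1^2 - d*b2^2 = -1, b2 - a2 ≠ 0, and c = (a1*b2 - a2*b1)/(b2 - a2). Then (a1 - c)^2*(b1^2 + 1) = (b1 - c)^2*(a1^2 + 1). -/
theorem stmt_1 (d a1 a2 b1 b2 c : ℚ)
    (ha : a1 ^ 2 - d * a2 ^ 2 = -1) (hb : b1 ^ 2 - d * b2 ^ 2 = -1)
    (hne : b2 - a2 ≠ 0) (hc : c = (a1 * b2 - a2 * b1) / (b2 - a2)) :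
    (a1 - c) ^ 2 * (b1 ^ 2 + 1) = (b1 - c) ^ 2 * (a1 ^ 2 + 1) := by
  have h1 : a1 ^ 2 + 1 = d * a2 ^ 2 := by linarith
  have h2 : b1 ^ 2 + 1 = d * b2 ^ 2 := by linarith
  subst hc
  rw [h1, h2]
  field_simp
  ring
end

section
/- Let l, m, n be integers with l*m*n ≠ 0, |l| ≠ |m|, and l*m ≠ n^2. Set a = (l^2 - n^2)/(2*l*n), b = (m^2 - n^2)/(2*m*n), c = (l*m - n^2)/((l+m)*n), assuming l + m ≠ 0. Then (a - c)^2*(b^2 + 1) = (b - c)^2*(a^2 + 1). -/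
theorem stmt_3 (l m n : ℤ) (h0 : l * m * n ≠ 0) (hlm : |l| ≠ |m|)
    (hn : l * m ≠ n ^ 2) (hsum : l + m ≠ 0)
    (a b c : ℚ)
    (ha : a = ((l : ℚ) ^ 2 - (n : ℚ) ^ 2) / (2 * l * n))
    (hb : b = ((m : ℚ) ^ 2 - (n : ℚ) ^ 2) / (2 * m * n))
    (hc : c = ((l : ℚ) * m - (n : ℚ) ^ 2) / ((l + m) * n)) :
    (a - c) ^ 2 * (b ^ 2 + 1) = (b - c) ^ 2 * (a ^ 2 + 1) := by
  have hl : l ≠ 0 := fun h => h0 (by simp [h])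
  have hm : m ≠ 0 := fun h => h0 (by simp [h])
  have hnz : n ≠ 0 := fun h => h0 (by simp [h])
  have hl' : (l : ℚ) ≠ 0 := Int.cast_ne_zero.mpr hl
  have hm' : (m : ℚ) ≠ 0 := Int.cast_ne_zero.mpr hm
  have hn' : (n : ℚ) ≠ 0 := Int.cast_ne_zero.mpr hnz
  have hs' : (l : ℚ) + m ≠ 0 := by
    rw [← Int.cast_add]; exact Int.cast_ne_zero.mpr hsum
  subst ha hb hc
  field_simp
  ring
end

section
/- Let d > 1 be a square-free integer and let p1, ..., pr be distinct primes with exponents n1, ..., nr ≥ 0. If for each i the equation |x^2 - d*y^2| = pi^{ni} has an integral solution (a_{i,1}, a_{i,2}) with gcd(a_{i,1}, d*a_{i,2}) = 1, then the pair (x,y) defined by x + y*√d = ∏_{i=1}^r (a_{i,1} + a_{i,2}*√d) (in Z[√d]) satisfies |x^2 - d*y^2| = ∏ pi^{ni} and gcd(x, d*y) = 1. -/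
theorem stmt_6 (d : ℤ) (hd : 1 < d) (hsf : Squarefree d) (r : ℕ)
    (p : Fin r → ℕ) (hp : ∀ i, (p i).Prime) (hinj : Function.Injective p)
    (n : Fin r → ℕ) (a : Fin r → Zsqrtd d)
    (hsol : ∀ i, |(a i).re ^ 2 - d * (a i).im ^ 2| = (p i : ℤ) ^ n i)
    (hprim : ∀ i, Int.gcd (a i).re (d * (a i).im) = 1) :
    |(∏ i, a i).re ^ 2 - d * (∏ i, a i).im ^ 2| = ∏ i, (p i : ℤ) ^ n i ∧
      Int.gcd (∏ i, a i).re (d * (∏ i, a i).im) = 1 := by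
  have hnorm : ∀ z : Zsqrtd d, z.norm = z.re ^ 2 - d * z.im ^ 2 := by
    intro z; simp [Zsqrtd.norm]; ring
  have hprodnorm : (∏ i, a i).norm = ∏ i, (a i).norm :=
    map_prod (Zsqrtd.normMonoidHom (d := d)) _ _
  have h1 : |(∏ i, a i).re ^ 2 - d * (∏ i, a i).im ^ 2| = ∏ i, (p i : ℤ) ^ n i := by
    rw [← hnorm, hprodnorm, Finset.abs_prod]
    exact Finset.prod_congr rfl fun i _ => by rw [hnorm]; exact hsol i
  refine ⟨h1, ?_⟩
  by_contra hne
  obtain ⟨q, hq, hqdvd⟩ := Nat.exists_prime_and_dvd hne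
  have hqZ : Prime (q : ℤ) := Nat.prime_iff_prime_int.mp hq
  have hqX : (q : ℤ) ∣ (∏ i, a i).re :=
    dvd_trans (Int.natCast_dvd_natCast.mpr hqdvd) (Int.gcd_dvd_left _ _)
  have hqdY : (q : ℤ) ∣ d * (∏ i, a i).im :=
    dvd_trans (Int.natCast_dvd_natCast.mpr hqdvd) (Int.gcd_dvd_right _ _)
  -- q divides the norm of the product
  have hqN : (q : ℤ) ∣ (∏ i, a i).norm := by
    rw [hnorm]
    have : (∏ i, a i).re ^ 2 - d * (∏ i, a i).im ^ 2 =
        (∏ i, a i).re * (∏ i, a i).re - (d * (∏ i, a i).im) * (∏ i, a i).im := by ring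
    rw [this]
    exact dvd_sub (hqX.mul_right _) (hqdY.mul_right _)
  have hqP : (q : ℤ) ∣ ∏ i, (p i : ℤ) ^ n i := by
    rw [← h1, ← hnorm]; exact (dvd_abs _ _).mpr hqN
  obtain ⟨i, -, hqi⟩ := hqZ.exists_mem_finset_dvd hqP
  have hni : n i ≠ 0 := by
    rintro h0; rw [h0, pow_zero] at hqi
    exact hqZ.not_dvd_one hqi
  have hqpi : q = p i := by
    have h := hqZ.dvd_of_dvd_pow hqi
    exact (Nat.prime_dvd_prime_iff_eq hq (hp i)).mp (Int.natCast_dvd_natCast.mp h)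
  -- q divides the norm of a i
  have hqNi : (q : ℤ) ∣ (p i : ℤ) ^ n i := hqi
  by_cases hqd : (q : ℤ) ∣ d
  · -- case q ∣ d : then q ∣ (a i).re
    have hre : (q : ℤ) ∣ (a i).re := by
      have h2 : (q : ℤ) ∣ (a i).re ^ 2 - d * (a i).im ^ 2 := by
        rw [← dvd_abs, hsol i]; exact hqNi
      have : (q : ℤ) ∣ (a i).re ^ 2 := by
        have := dvd_add h2 (hqd.mul_right ((a i).im ^ 2))
        simpa using this
      exact hqZ.dvd_of_dvd_pow this
    have : (q : ℤ) ∣ (Int.gcd (a i).re (d * (a i).im) : ℤ) :=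
      Int.dvd_coe_gcd hre (hqd.mul_right _)
    rw [hprim i] at this
    exact hqZ.not_dvd_one (by exact_mod_cast this)
  · -- case q ∤ d : then q ∣ (∏ a).im
    have hqY : (q : ℤ) ∣ (∏ i, a i).im :=
      (hqZ.dvd_mul.mp hqdY).resolve_left hqd
    set b : Zsqrtd d := ∏ j ∈ Finset.univ.erase i, a j with hb
    have hsplit : (∏ j, a j) = a i * b := (Finset.mul_prod_erase _ _ (Finset.mem_univ i)).symm
    have hbnorm : |b.norm| = ∏ j ∈ Finset.univ.erase i, (p j : ℤ) ^ n j := by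
      have hm : b.norm = ∏ j ∈ Finset.univ.erase i, (a j).norm :=
        map_prod (Zsqrtd.normMonoidHom (d := d)) a _
      rw [hm, Finset.abs_prod]
      exact Finset.prod_congr rfl fun j _ => by rw [hnorm]; exact hsol j
    have hqb : ¬ (q : ℤ) ∣ b.norm := by
      intro hdvd
      rw [← dvd_abs, hbnorm] at hdvd
      obtain ⟨j, hj, hdj⟩ := hqZ.exists_mem_finset_dvd hdvd
      have : q = p j := by
        have h := hqZ.dvd_of_dvd_pow hdj
        exact (Nat.prime_dvd_prime_iff_eq hq (hp j)).mp (Int.natCast_dvd_natCast.mp h)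
      exact (Finset.ne_of_mem_erase hj) (hinj (hqpi.symm.trans this).symm)
    -- multiply the product by star b
    have key : ∀ c : Zsqrtd d, (q:ℤ) ∣ c.re → (q:ℤ) ∣ c.im →
        (q:ℤ) ∣ (c * star b).re ∧ (q:ℤ) ∣ (c * star b).im := by
      intro c h1 h2
      constructor
      · rw [Zsqrtd.re_mul]; exact dvd_add (h1.mul_right _) ((h2.mul_left d).mul_right _)
      · rw [Zsqrtd.im_mul]; exact dvd_add (h1.mul_right _) (h2.mul_right _)
    obtain ⟨k1, k2⟩ := key (∏ j, a j) hqX hqY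
    have heq : (∏ j, a j) * star b = a i * (b.norm : Zsqrtd d) := by
      rw [hsplit, mul_assoc, ← Zsqrtd.norm_eq_mul_conj]
    rw [heq] at k1 k2
    have hre2 : (q:ℤ) ∣ (a i).re * b.norm := by simpa [Zsqrtd.re_mul] using k1
    have him2 : (q:ℤ) ∣ (a i).im * b.norm := by simpa [Zsqrtd.im_mul] using k2
    have hre : (q:ℤ) ∣ (a i).re := (hqZ.dvd_mul.mp hre2).resolve_right hqb
    have him : (q:ℤ) ∣ (a i).im := (hqZ.dvd_mul.mp him2).resolve_right hqb
    have : (q : ℤ) ∣ (Int.gcd (a i).re (d * (a i).im) : ℤ) :=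
      Int.dvd_coe_gcd hre (him.mul_left d)
    rw [hprim i] at this
    exact hqZ.not_dvd_one (by exact_mod_cast this)
end
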